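/- In U_q^+(so_5), the element z' := −(q²−q⁻²)(q+q⁻¹)E4E2 + q²(q²−1)E3² is central, where E3 = E1E2 − q⁻²E2E1 and E4 = (q+q⁻¹)⁻¹(E1²E2 − q⁻¹(q+q⁻¹)E1E2E1 + q⁻²E2E1²). -/

import Mathlib

noncomputable section

open FreeAlgebra

/-- The quantum Serre relations of type B₂ defining `U_q⁺(so₅)`. -/
inductive so5Rel (q : ℂ) : FreeAlgebra ℂ (Fin 2) → FreeAlgebra ℂ (Fin 2) → Prop
  | serre1 : so5Rel q
      (ι ℂ 0 * ι ℂ 0 * ι ℂ 0 * ι ℂ 1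
        - (q ^ 2 + 1 + (q ^ 2)⁻¹) • (ι ℂ 0 * ι ℂ 0 * ι ℂ 1 * ι ℂ 0)
        + (q ^ 2 + 1 + (q ^ 2)⁻¹) • (ι ℂ 0 * ι ℂ 1 * ι ℂ 0 * ι ℂ 0)
        - ι ℂ 1 * ι ℂ 0 * ι ℂ 0 * ι ℂ 0) 0
  | serre2 : so5Rel q
      (ι ℂ 1 * ι ℂ 1 * ι ℂ 0 - (q ^ 2 + (q ^ 2)⁻¹) • (ι ℂ 1 * ι ℂ 0 * ι ℂ 1)
        + ι ℂ 0 * ι ℂ 1 * ι ℂ 1) 0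

/-- `U_q⁺(so₅)`. -/
abbrev UqB2 (q : ℂ) := RingQuot (so5Rel q)

def F₁ (q : ℂ) : UqB2 q := RingQuot.mkAlgHom ℂ (so5Rel q) (ι ℂ 0)
def F₂ (q : ℂ) : UqB2 q := RingQuot.mkAlgHom ℂ (so5Rel q) (ι ℂ 1)

/-- The root vector `E₃ = E₁E₂ - q⁻²E₂E₁`. -/
def F₃ (q : ℂ) : UqB2 q := F₁ q * F₂ q - (q ^ 2)⁻¹ • (F₂ q * F₁ q)

/-- The root vector `E₄ = (q+q⁻¹)⁻¹ (E₁²E₂ - q⁻¹(q+q⁻¹)E₁E₂E₁ + q⁻²E₂E₁²)`. -/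
def F₄ (q : ℂ) : UqB2 q :=
  (q + q⁻¹)⁻¹ • (F₁ q * F₁ q * F₂ q - (q⁻¹ * (q + q⁻¹)) • (F₁ q * F₂ q * F₁ q)
    + (q ^ 2)⁻¹ • (F₂ q * F₁ q * F₁ q))

/-- The central element `z = (1-q²)E₁E₃ + q²(q+q⁻¹)E₄`. -/
def zB2 (q : ℂ) : UqB2 q := (1 - q ^ 2) • (F₁ q * F₃ q) + (q ^ 2 * (q + q⁻¹)) • F₄ q

/-- The central element `z' = -(q²-q⁻²)(q+q⁻¹)E₄E₂ + q²(q²-1)E₃²`. -/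
def z'B2 (q : ℂ) : UqB2 q :=
  (-((q ^ 2 - (q ^ 2)⁻¹) * (q + q⁻¹))) • (F₄ q * F₂ q) + (q ^ 2 * (q ^ 2 - 1)) • (F₃ q ^ 2)

/-- Abstract form of the element `z'` after cancelling `(q+q⁻¹)⁻¹`. -/
private def Zab {R : Type} [Ring R] [Algebra ℂ R] (q : ℂ) (A B : R) : R :=
  (-(q ^ 2 - (q ^ 2)⁻¹)) •
      ((A * A * B - (q⁻¹ * (q + q⁻¹)) • (A * B * A) + (q ^ 2)⁻¹ • (B * A * A)) * B)
    + (q ^ 2 * (q ^ 2 - 1)) • ((A * B - (q ^ 2)⁻¹ • (B * A)) ^ 2)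

set_option maxHeartbeats 1600000 in
private theorem key1 {R : Type} [Ring R] [Algebra ℂ R] (q : ℂ) (hq : q ≠ 0)
    (h2 : q ^ 2 + 1 ≠ 0) (A B : R) :
    Zab q A B * A - A * Zab q A B =
      (1 - (q ^ 2)⁻¹) • (B * (A * A * A * B
          - (q ^ 2 + 1 + (q ^ 2)⁻¹) • (A * A * B * A)
          + (q ^ 2 + 1 + (q ^ 2)⁻¹) • (A * B * A * A)
          - B * A * A * A))
      + (1 - (q ^ 2)⁻¹) • ((A * A * A * B
          - (q ^ 2 + 1 + (q ^ 2)⁻¹) • (A * A * B * A)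
          + (q ^ 2 + 1 + (q ^ 2)⁻¹) • (A * B * A * A)
          - B * A * A * A) * B)
      + (q ^ 2 - 1) • (A * A * (B * B * A
          - (q ^ 2 + (q ^ 2)⁻¹) • (B * A * B) + A * B * B))
      - (q ^ 2 - (q ^ 2)⁻¹) • (A * (B * B * A
          - (q ^ 2 + (q ^ 2)⁻¹) • (B * A * B) + A * B * B) * A)
      + (1 - (q ^ 2)⁻¹) • ((B * B * A
          - (q ^ 2 + (q ^ 2)⁻¹) • (B * A * B) + A * B * B) * A * A) := by
  have hq2 : (q : ℂ) ^ 2 ≠ 0 := pow_ne_zero _ hq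
  have e1 : (1 : ℂ) + q ^ 2 ≠ 0 := by intro h; apply h2; linear_combination h
  have e2 : q ^ 2 + q ^ 4 ≠ 0 := by
    intro h; apply h2
    have : q ^ 2 * (1 + q ^ 2) = 0 := by linear_combination h
    rcases mul_eq_zero.1 this with h' | h'
    · exact absurd h' hq2
    · linear_combination h'
  have e3 : q ^ 4 + q ^ 6 ≠ 0 := by
    intro h; apply h2
    have : q ^ 4 * (1 + q ^ 2) = 0 := by linear_combination h
    rcases mul_eq_zero.1 this with h' | h'
    · exact absurd h' (pow_ne_zero _ hq)
    · linear_combination h'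
  simp only [Zab]
  simp only [smul_sub, smul_add, smul_smul, sub_mul, mul_sub, add_mul, mul_add,
    smul_mul_assoc, mul_smul_comm, pow_two, mul_assoc, neg_smul, neg_mul, neg_neg,
    neg_add, neg_sub]
  match_scalars <;> (try field_simp) <;> (try ring) <;>
    (simp only [inv_pow]; field_simp; try ring)

set_option maxHeartbeats 1600000 in
private theorem key2 {R : Type} [Ring R] [Algebra ℂ R] (q : ℂ) (hq : q ≠ 0)
    (h2 : q ^ 2 + 1 ≠ 0) (A B : R) :
    Zab q A B * B - B * Zab q A B =
      (1 - (q ^ 2)⁻¹) • (A * B * (B * B * A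
          - (q ^ 2 + (q ^ 2)⁻¹) • (B * A * B) + A * B * B))
      - (q ^ 2 - (q ^ 2)⁻¹) • (A * (B * B * A
          - (q ^ 2 + (q ^ 2)⁻¹) • (B * A * B) + A * B * B) * B)
      + (q ^ 2 - (q ^ 2)⁻¹ * (q ^ 2)⁻¹) • ((B * B * A
          - (q ^ 2 + (q ^ 2)⁻¹) • (B * A * B) + A * B * B) * A * B)
      - ((q ^ 2)⁻¹ - (q ^ 2)⁻¹ * (q ^ 2)⁻¹) • (B * A * (B * B * A
          - (q ^ 2 + (q ^ 2)⁻¹) • (B * A * B) + A * B * B))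
      - (1 - (q ^ 2)⁻¹) • ((B * B * A
          - (q ^ 2 + (q ^ 2)⁻¹) • (B * A * B) + A * B * B) * B * A) := by
  have hq2 : (q : ℂ) ^ 2 ≠ 0 := pow_ne_zero _ hq
  have e1 : (1 : ℂ) + q ^ 2 ≠ 0 := by intro h; apply h2; linear_combination h
  have e2 : q ^ 2 + q ^ 4 ≠ 0 := by
    intro h; apply h2
    have : q ^ 2 * (1 + q ^ 2) = 0 := by linear_combination h
    rcases mul_eq_zero.1 this with h' | h'
    · exact absurd h' hq2
    · linear_combination h'
  have e3 : q ^ 4 + q ^ 6 ≠ 0 := by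
    intro h; apply h2
    have : q ^ 4 * (1 + q ^ 2) = 0 := by linear_combination h
    rcases mul_eq_zero.1 this with h' | h'
    · exact absurd h' (pow_ne_zero _ hq)
    · linear_combination h'
  simp only [Zab]
  simp only [smul_sub, smul_add, smul_smul, sub_mul, mul_sub, add_mul, mul_add,
    smul_mul_assoc, mul_smul_comm, pow_two, mul_assoc, neg_smul, neg_mul, neg_neg,
    neg_add, neg_sub]
  match_scalars <;> (try field_simp) <;> (try ring) <;>
    (simp only [inv_pow]; field_simp; try ring)

private theorem z'_eq_Zab (q : ℂ) (hq : q ≠ 0) (h2 : q ^ 2 + 1 ≠ 0) (hqq : q + q⁻¹ ≠ 0) :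
    z'B2 q = Zab q (F₁ q) (F₂ q) := by
  simp only [z'B2, F₄, F₃, Zab, smul_mul_assoc, smul_smul]
  have e : q ^ 3 + q ^ 5 ≠ 0 := by
    intro h; apply h2
    have : q ^ 3 * (1 + q ^ 2) = 0 := by linear_combination h
    rcases mul_eq_zero.1 this with h' | h'
    · exact absurd h' (pow_ne_zero _ hq)
    · linear_combination h'
  congr 2
  field_simp
  try linear_combination (1 - q ^ 4) * mul_inv_cancel₀ e

theorem stmt10 (q : ℂ) (hq : q ≠ 0) (hq' : ∀ n : ℕ, 0 < n → q ^ n ≠ 1) :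
    ∀ x : UqB2 q, z'B2 q * x = x * z'B2 q := by
  have h2 : q ^ 2 + 1 ≠ 0 := by
    intro h
    apply hq' 4 (by norm_num)
    have : q ^ 2 = -1 := by linear_combination h
    rw [show q ^ 4 = (q ^ 2) ^ 2 by ring, this]; ring
  have hqq : q + q⁻¹ ≠ 0 := by
    intro h; apply h2; field_simp at h; linear_combination h
  have hr1 : F₁ q * F₁ q * F₁ q * F₂ q
      - (q ^ 2 + 1 + (q ^ 2)⁻¹) • (F₁ q * F₁ q * F₂ q * F₁ q)
      + (q ^ 2 + 1 + (q ^ 2)⁻¹) • (F₁ q * F₂ q * F₁ q * F₁ q)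
      - F₂ q * F₁ q * F₁ q * F₁ q = 0 := by
    have h := RingQuot.mkAlgHom_rel ℂ (so5Rel.serre1 (q := q))
    simpa only [map_sub, map_add, map_mul, map_smul, map_zero, F₁, F₂] using h
  have hr2 : F₂ q * F₂ q * F₁ q - (q ^ 2 + (q ^ 2)⁻¹) • (F₂ q * F₁ q * F₂ q)
      + F₁ q * F₂ q * F₂ q = 0 := by
    have h := RingQuot.mkAlgHom_rel ℂ (so5Rel.serre2 (q := q))
    simpa only [map_sub, map_add, map_mul, map_smul, map_zero, F₁, F₂] using h
  have hz := z'_eq_Zab q hq h2 hqq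
  have comm1 : z'B2 q * F₁ q = F₁ q * z'B2 q := by
    have k := key1 q hq h2 (F₁ q) (F₂ q)
    rw [hr1, hr2] at k
    simp only [smul_zero, mul_zero, zero_mul, add_zero, sub_zero, zero_add] at k
    rw [hz]
    exact sub_eq_zero.1 k
  have comm2 : z'B2 q * F₂ q = F₂ q * z'B2 q := by
    have k := key2 q hq h2 (F₁ q) (F₂ q)
    rw [hr2] at k
    simp only [smul_zero, mul_zero, zero_mul, add_zero, sub_zero, zero_add] at k
    rw [hz]
    exact sub_eq_zero.1 k
  intro x
  obtain ⟨y, rfl⟩ := RingQuot.mkAlgHom_surjective ℂ (so5Rel q) x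
  induction y using FreeAlgebra.induction with
  | grade0 r =>
      rw [AlgHom.commutes]
      exact (Algebra.commutes r (z'B2 q)).symm
  | grade1 i =>
      fin_cases i
      · exact comm1
      · exact comm2
  | mul a b ha hb =>
      rw [map_mul, ← mul_assoc, ha, mul_assoc, hb, mul_assoc]
  | add a b ha hb =>
      rw [map_add, mul_add, add_mul, ha, hb]
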